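/- arXiv:1612.04151 — 6 statements merged into one kernel-verified Lean document; each statement's English description precedes it below -/
import Mathlib

section
/- Let Φ be the Gneiting function τ_{2,7/2} with support size c > 0 and let Δ > 0. If c > 5.09 Δ, then Δ · Φ'(r) > -1/√2 for all r ∈ [0, c]. -/
lemma gneiting_key_poly (s : ℝ) (h0 : 0 ≤ s) :
    s^5*(15*s^2-7)*(1-s^2) ≤ 0.58166 := by
  nlinarith [sq_nonneg (s^2 - 0.8274), sq_nonneg (s - 0.9096), sq_nonneg s,
    mul_nonneg h0 (sq_nonneg (s^2-0.8274)),
    mul_nonneg (mul_nonneg h0 h0) (sq_nonneg (s^2-0.8274)),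
    mul_nonneg (mul_nonneg (mul_nonneg h0 h0) h0) (sq_nonneg (s^2-0.8274)),
    sq_nonneg (s^2*(s^2-0.8274)), sq_nonneg (s*(s^2-0.8274))]

lemma sqrt_two_le : Real.sqrt 2 ≤ 1.414214 := by
  rw [show (1.414214:ℝ) = Real.sqrt (1.414214^2) from (Real.sqrt_sq (by norm_num)).symm]
  exact Real.sqrt_le_sqrt (by norm_num)

/-- One-landmark topology preservation for τ_{2,7/2}: if c > 5.09 Δ then
Δ·Φ'(r) > -1/√2 on [0,c]. -/
theorem gneiting_7half_topology (c Δ : ℝ) (hc : 0 < c) (hΔ : 0 < Δ)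
    (Φ : ℝ → ℝ)
    (hΦ : ∀ r : ℝ, Φ r =
      (max (1 - r / c) 0) ^ ((7 : ℝ) / 2) *
        (1 + (7 / 2) * (r / c) - (135 / 8) * (r / c) ^ 2))
    (hcΔ : c > 5.09 * Δ) :
    ∀ r ∈ Set.Icc (0 : ℝ) c, Δ * deriv Φ r > -(1 / Real.sqrt 2) := by
  have hs2pos : (0:ℝ) < Real.sqrt 2 := by positivity
  intro r hr
  obtain ⟨hr0, hrc⟩ := hr
  set h : ℝ → ℝ := fun t =>
    (1 - t / c) ^ ((7 : ℝ) / 2) *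
      (1 + (7 / 2) * (t / c) - (135 / 8) * (t / c) ^ 2) with hh
  -- derivative building blocks (at an arbitrary point t)
  have hdiv : ∀ t : ℝ, HasDerivAt (fun x : ℝ => x / c) (1/c) t := by
    intro t
    simpa using (hasDerivAt_id t).div_const c
  have hu' : ∀ t : ℝ, HasDerivAt (fun x : ℝ => 1 - x / c) (-(1/c)) t := fun t =>
    (hdiv t).const_sub 1
  have hpoly : ∀ t : ℝ, HasDerivAt
      (fun x : ℝ => 1 + (7 / 2) * (x / c) - (135 / 8) * (x / c) ^ 2)
      ((7/2) * (1/c) - (135/8) * (2 * (t/c) ^ 1 * (1/c))) t := by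
    intro t
    exact ((HasDerivAt.const_mul (7/2 : ℝ) (hdiv t)).const_add 1).sub
      (HasDerivAt.const_mul (135/8 : ℝ) ((hdiv t).pow 2))
  by_cases hlt : r < c
  · -- interior case
    have hu : 0 < 1 - r / c := by
      rw [sub_pos]
      exact (div_lt_one hc).2 hlt
    have hrp : HasDerivAt (fun x : ℝ => (1 - x / c) ^ ((7:ℝ)/2))
        (-(1/c) * ((7:ℝ)/2) * (1 - r/c) ^ ((7:ℝ)/2 - 1)) r :=
      (hu' r).rpow_const (Or.inl hu.ne')
    have hmul := hrp.mul (hpoly r)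
    have heq : Φ =ᶠ[nhds r] h := by
      filter_upwards [Iio_mem_nhds hlt] with t ht
      rw [hΦ t, hh]
      have : (0:ℝ) ≤ 1 - t / c := by
        rw [sub_nonneg]
        exact le_of_lt ((div_lt_one hc).2 ht)
      rw [max_eq_left this]
    have hΦd := hmul.congr_of_eventuallyEq heq
    rw [hΦd.deriv]
    -- substitute s = sqrt(1 - r/c)
    set s := Real.sqrt (1 - r/c) with hs
    have hs0 : 0 ≤ s := Real.sqrt_nonneg _
    have hs2 : s ^ 2 = 1 - r / c := Real.sq_sqrt hu.le
    have e5 : (1 - r/c) ^ ((7:ℝ)/2 - 1) = s ^ 5 := by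
      rw [show (7:ℝ)/2 - 1 = 5/2 by norm_num, ← hs2, ← Real.rpow_natCast s 2,
        ← Real.rpow_mul hs0, show ((2:ℕ):ℝ) * ((5:ℝ)/2) = ((5:ℕ):ℝ) by push_cast; ring,
        Real.rpow_natCast]
    have e7 : (1 - r/c) ^ ((7:ℝ)/2) = s ^ 7 := by
      rw [← hs2, ← Real.rpow_natCast s 2,
        ← Real.rpow_mul hs0, show ((2:ℕ):ℝ) * ((7:ℝ)/2) = ((7:ℕ):ℝ) by push_cast; ring,
        Real.rpow_natCast]
    have hx : r / c = 1 - s ^ 2 := by rw [hs2]; ring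
    rw [e5, e7, hx]
    -- now the goal is polynomial in s, Δ, c
    have hval : -(1/c) * ((7:ℝ)/2) * s ^ 5 * (1 + 7/2 * (1 - s^2) - 135/8 * (1 - s^2)^2)
        + s ^ 7 * ((7/2) * (1/c) - (135/8) * (2 * (1 - s^2) ^ 1 * (1/c)))
        = (99/16) * (s^5*(15*s^2-7)*(s^2-1)) / c := by
      field_simp
      ring
    rw [hval]
    have hX : s^5*(15*s^2-7)*(s^2-1) ≥ -(0.58166) := by
      have := gneiting_key_poly s hs0
      nlinarith
    have step1 : Δ * ((99/16) * (s^5*(15*s^2-7)*(s^2-1)) / c)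
        ≥ Δ * ((99/16) * (-(0.58166)) / c) := by
      gcongr
    have step2 : Δ * ((99/16) * (-(0.58166)) / c) > -(1 / Real.sqrt 2) := by
      have e : Δ * ((99/16) * (-(0.58166)) / c) = -(Δ * (99/16*0.58166) / c) := by ring
      rw [e, gt_iff_lt, neg_lt_neg_iff, div_lt_div_iff₀ hc hs2pos]
      nlinarith [mul_le_mul_of_nonneg_left sqrt_two_le
        (by positivity : (0:ℝ) ≤ Δ * (99/16*0.58166)), hΔ, hcΔ]
    linarith [step1, step2]
  · -- r = c
    have hrceq : r = c := le_antisymm hrc (not_lt.1 hlt)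
    have hrp : HasDerivAt (fun x : ℝ => (1 - x / c) ^ ((7:ℝ)/2))
        (-(1/c) * ((7:ℝ)/2) * (1 - r/c) ^ ((7:ℝ)/2 - 1)) r :=
      (hu' r).rpow_const (Or.inr (by norm_num : (1:ℝ) ≤ (7:ℝ)/2))
    have hmul := hrp.mul (hpoly r)
    have hcc : (1 : ℝ) - r / c = 0 := by rw [hrceq]; field_simp; ring
    have h0 : HasDerivAt h 0 r := by
      refine HasDerivAt.congr_deriv (f := h) hmul ?_
      rw [hcc, Real.zero_rpow (by norm_num : (7:ℝ)/2 ≠ 0),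
        Real.zero_rpow (by norm_num : (7:ℝ)/2 - 1 ≠ 0)]
      ring
    have hIic : HasDerivWithinAt Φ 0 (Set.Iic r) r := by
      refine (h0.hasDerivWithinAt).congr (fun t ht => ?_) ?_
      · rw [hΦ t, hh]
        have : (0:ℝ) ≤ 1 - t / c := by
          rw [sub_nonneg]
          exact (div_le_one hc).2 (le_trans ht hrceq.le)
        rw [max_eq_left this]
      · rw [hΦ r, hh, max_eq_left hcc.ge]
    have hIci : HasDerivWithinAt Φ 0 (Set.Ici r) r := by
      refine (hasDerivWithinAt_const r _ 0).congr (fun t ht => ?_) ?_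
      · rw [hΦ t]
        have : 1 - t / c ≤ (0:ℝ) := by
          rw [sub_nonpos]
          exact (one_le_div hc).2 (le_of_eq_of_le hrceq.symm ht)
        rw [max_eq_right this, Real.zero_rpow (by norm_num : (7:ℝ)/2 ≠ 0), zero_mul]
      · rw [hΦ r, max_eq_right hcc.le, Real.zero_rpow (by norm_num : (7:ℝ)/2 ≠ 0), zero_mul]
    have hΦd : HasDerivAt Φ 0 r := by
      have := hIic.union hIci
      rw [Set.Iic_union_Ici] at this
      exact hasDerivWithinAt_univ.mp this
    rw [hΦd.deriv, mul_zero]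
    have : 0 < 1 / Real.sqrt 2 := by positivity
    linarith
end

section
/- Let Φ be the Gneiting function τ_{2,5} with support size c > 0 and let Δ > 0. If c > 6.26 Δ, then Δ · Φ'(r) > -1/√2 for all r ∈ [0, c]. -/
private lemma max_deriv_zero : HasDerivAt (fun y : ℝ => (max y 0) ^ (5:ℕ)) 0 0 := by
  rw [hasDerivAt_iff_isLittleO, Asymptotics.isLittleO_iff]
  intro ε hε
  filter_upwards [Metric.ball_mem_nhds (0:ℝ) (lt_min one_pos hε)] with x hx
  rw [Metric.mem_ball, Real.dist_eq, sub_zero] at hx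
  have h1 : |x| < 1 := lt_of_lt_of_le hx (min_le_left _ _)
  have h2 : |x| < ε := lt_of_lt_of_le hx (min_le_right _ _)
  have hmx : (0:ℝ) ≤ max x 0 := le_max_right _ _
  have hmx2 : max x 0 ≤ |x| := max_le (le_abs_self x) (abs_nonneg x)
  have h4 : |x| ^ 4 ≤ ε := le_of_lt (lt_of_le_of_lt (pow_le_of_le_one (abs_nonneg x) h1.le (by norm_num)) h2)
  calc ‖(max x 0) ^ (5:ℕ) - (max (0:ℝ) 0) ^ (5:ℕ) - (x - 0) • (0:ℝ)‖ = (max x 0) ^ (5:ℕ) := by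
        simp [abs_of_nonneg (pow_nonneg hmx 5)]
    _ ≤ |x| ^ (5:ℕ) := pow_le_pow_left₀ hmx hmx2 5
    _ = |x| ^ 4 * |x| := by ring
    _ ≤ ε * |x| := mul_le_mul_of_nonneg_right h4 (abs_nonneg x)
    _ = ε * ‖x - 0‖ := by rw [sub_zero, Real.norm_eq_abs]

private lemma max_deriv (x : ℝ) (hx : 0 ≤ x) :
    HasDerivAt (fun y : ℝ => (max y 0) ^ (5:ℕ)) (5 * x ^ 4) x := by
  rcases eq_or_lt_of_le hx with h | h
  · rw [← h]
    simpa using max_deriv_zero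
  · have hpow : HasDerivAt (fun y : ℝ => y ^ (5:ℕ)) (5 * x ^ 4) x := by
      simpa using hasDerivAt_pow 5 x
    apply hpow.congr_of_eventuallyEq
    filter_upwards [lt_mem_nhds h] with y hy
    rw [max_eq_left hy.le]

/-- One-landmark topology preservation for τ_{2,5}: if c > 6.26 Δ then
Δ·Φ'(r) > -1/√2 on [0,c]. -/
theorem gneiting_25_topology (c Δ : ℝ) (hc : 0 < c) (hΔ : 0 < Δ)
    (Φ : ℝ → ℝ)
    (hΦ : ∀ r : ℝ, Φ r =
      (max (1 - r / c) 0) ^ (5 : ℕ) *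
        (1 + 5 * (r / c) - 27 * (r / c) ^ 2))
    (hcΔ : c > 6.26 * Δ) :
    ∀ r ∈ Set.Icc (0 : ℝ) c, Δ * deriv Φ r > -(1 / Real.sqrt 2) := by
  intro r hr
  obtain ⟨hr0, hrc⟩ := hr
  have hΦfun : Φ = fun r => (max (1 - r / c) 0) ^ (5:ℕ) * (1 + 5 * (r/c) - 27 * (r/c)^2) :=
    funext hΦ
  have hu0 : 0 ≤ r / c := div_nonneg hr0 hc.le
  have hu1 : r / c ≤ 1 := (div_le_one hc).2 hrc
  have h1u : 0 ≤ 1 - r / c := by linarith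
  -- inner derivative
  have hinner : HasDerivAt (fun r : ℝ => 1 - r / c) (-(1/c)) r := by
    simpa using ((hasDerivAt_id r).div_const c).const_sub 1
  have hcomp : HasDerivAt (fun r : ℝ => (max (1 - r / c) 0) ^ (5:ℕ))
      (5 * (1 - r/c) ^ 4 * -(1/c)) r := by
    have := (max_deriv (1 - r / c) h1u).comp r hinner
    exact this
  have hrc' : HasDerivAt (fun r : ℝ => r / c) (1/c) r := by
    simpa using (hasDerivAt_id r).div_const c
  have hpoly : HasDerivAt (fun r : ℝ => 1 + 5 * (r/c) - 27 * (r/c)^2)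
      (5 * (1/c) - 27 * (2 * (r/c) ^ 1 * (1/c))) r :=
    ((hrc'.const_mul 5).const_add 1).sub ((hrc'.pow 2).const_mul 27)
  have hΦd : HasDerivAt Φ ((21 * (r/c) * (9 * (r/c) - 4) * (1 - r/c)^4) / c) r := by
    rw [hΦfun]
    convert hcomp.mul hpoly using 1
    · rfl
    · rfl
    · rfl
    rw [max_eq_left h1u]
    field_simp
    ring
  rw [hΦd.deriv]
  have hkey : 21 * (r/c) * (9 * (r/c) - 4) * (1 - r/c)^4 ≥ -(442648/100000) := by
    set u := r / c
    nlinarith [sq_nonneg (27*u^2-19*u+2), sq_nonneg (u*(27*u^2-19*u+2)),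
      sq_nonneg ((1-u)*(27*u^2-19*u+2)), sq_nonneg (u*(1-u)), sq_nonneg u,
      sq_nonneg (1-u), sq_nonneg (u-1/8), sq_nonneg (u*(u-1))]
  have hs0 : 0 < Real.sqrt 2 := Real.sqrt_pos.2 (by norm_num)
  have hs2 : Real.sqrt 2 * Real.sqrt 2 = 2 := Real.mul_self_sqrt (by norm_num)
  have hLs : (442648/100000 : ℝ) * Real.sqrt 2 < 6.26 := by
    nlinarith [hs2, hs0.le]
  rw [gt_iff_lt, neg_lt, ← neg_mul, ← mul_div_assoc, div_lt_div_iff₀ hc hs0]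
  nlinarith [mul_nonneg (mul_nonneg hΔ.le hs0.le)
      (by linarith [hkey] : (0:ℝ) ≤ 21 * (r/c) * (9 * (r/c) - 4) * (1 - r/c)^4 + 442648/100000),
    mul_pos (by linarith : (0:ℝ) < 6.26 - (442648/100000) * Real.sqrt 2) hΔ]
end

section
/- Let P(r) = 1 - (99/4) r² + (1155/16) r³ (the cubic Taylor approximation of τ_{2,7/2}), and set α(c) = P(√2/c), β(c) = P(2/c). Then c³·[(1 + β(c))² - 4 α(c)²] → 1155(2 - √2) as c → ∞. -/
/-- For P(r) = 1 - (99/4)r² + (1155/16)r³, α(c) = P(√2/c), β(c) = P(2/c), one has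
c³·[(1+β(c))² - 4α(c)²] → 1155(2 - √2) as c → ∞. -/
theorem gneiting_7half_fourlandmark_asymptotics (P : ℝ → ℝ)
    (hP : ∀ r : ℝ, P r = 1 - (99 / 4) * r ^ 2 + (1155 / 16) * r ^ 3) :
    Filter.Tendsto
      (fun c : ℝ => c ^ 3 * ((1 + P (2 / c)) ^ 2 - 4 * (P (Real.sqrt 2 / c)) ^ 2))
      Filter.atTop (nhds (1155 * (2 - Real.sqrt 2))) := by
  have hs : Real.sqrt 2 ^ 2 = 2 := Real.sq_sqrt (by norm_num)
  have key : ∀ c : ℝ, c ≠ 0 →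
      c ^ 3 * ((1 + P (2 / c)) ^ 2 - 4 * (P (Real.sqrt 2 / c)) ^ 2)
      = (2310 - 1155 * Real.sqrt 2) + (114345 * Real.sqrt 2 / 2 - 114345) / c ^ 2
        + (1334025 / 8) / c ^ 3 := by
    intro c hc
    rw [hP, hP]
    have h3 : Real.sqrt 2 ^ 3 = 2 * Real.sqrt 2 := by
      rw [pow_succ, hs]
    have h6 : Real.sqrt 2 ^ 6 = 8 := by
      have : Real.sqrt 2 ^ 6 = (Real.sqrt 2 ^ 2) ^ 3 := by ring
      rw [this, hs]; norm_num
    field_simp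
    ring_nf
    rw [h3, h6]
    have h4 : Real.sqrt 2 ^ 4 = 4 := by
      rw [show Real.sqrt 2 ^ 4 = (Real.sqrt 2 ^ 2) ^ 2 by ring, hs]; norm_num
    have h5 : Real.sqrt 2 ^ 5 = 4 * Real.sqrt 2 := by
      rw [show Real.sqrt 2 ^ 5 = (Real.sqrt 2 ^ 2) ^ 2 * Real.sqrt 2 by ring, hs]; norm_num
    linear_combination 936714240 * c * h5 - 160579584 * c ^ 2 * h4 + 12976128 * c ^ 4 * hs
  have h2 : Filter.Tendsto
      (fun c : ℝ => (2310 - 1155 * Real.sqrt 2) + (114345 * Real.sqrt 2 / 2 - 114345) / c ^ 2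
        + (1334025 / 8) / c ^ 3) Filter.atTop (nhds (1155 * (2 - Real.sqrt 2))) := by
    have A : Filter.Tendsto (fun c : ℝ => (114345 * Real.sqrt 2 / 2 - 114345) / c ^ 2)
        Filter.atTop (nhds 0) :=
      Filter.Tendsto.div_atTop tendsto_const_nhds (Filter.tendsto_pow_atTop (by norm_num))
    have B : Filter.Tendsto (fun c : ℝ => (1334025 / 8 : ℝ) / c ^ 3)
        Filter.atTop (nhds 0) :=
      Filter.Tendsto.div_atTop tendsto_const_nhds (Filter.tendsto_pow_atTop (by norm_num))
    have C : Filter.Tendsto (fun _ : ℝ => (2310 - 1155 * Real.sqrt 2 : ℝ))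
        Filter.atTop (nhds (2310 - 1155 * Real.sqrt 2)) := tendsto_const_nhds
    have h := (C.add A).add B
    have hval : (2310 - 1155 * Real.sqrt 2) + 0 + 0 = 1155 * (2 - Real.sqrt 2) := by ring
    rwa [hval] at h
  refine h2.congr' ?_
  filter_upwards [Filter.eventually_gt_atTop 0] with c hc
  exact (key c hc.ne').symm
end

section
/- For all y > 1, the function f(y) = y² + 1 - y√(y² + 1) satisfies 1/2 < f(y) < 2 - √2, and f is strictly decreasing on (1, ∞) with limit 1/2 as y → ∞. -/
open Real Filter

lemma key_form (y : ℝ) (hy : 0 < y) :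
    y ^ 2 + 1 - y * Real.sqrt (y ^ 2 + 1)
      = Real.sqrt (y ^ 2 + 1) / (Real.sqrt (y ^ 2 + 1) + y) := by
  set s := Real.sqrt (y ^ 2 + 1) with hs
  have hs2 : s ^ 2 = y ^ 2 + 1 := Real.sq_sqrt (by positivity)
  have hspos : 0 < s := Real.sqrt_pos.2 (by positivity)
  rw [eq_div_iff (by positivity)]
  linear_combination (-y) * hs2

/-- For f(y) = y² + 1 - y√(y²+1) on (1,∞): 1/2 < f(y) < 2 - √2, f is strictly
decreasing on (1,∞), and f(y) → 1/2 as y → ∞. -/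
theorem fourlandmark_factor_bounds (f : ℝ → ℝ)
    (hf : ∀ y : ℝ, f y = y ^ 2 + 1 - y * Real.sqrt (y ^ 2 + 1)) :
    (∀ y : ℝ, 1 < y → 1 / 2 < f y ∧ f y < 2 - Real.sqrt 2) ∧
    StrictAntiOn f (Set.Ioi 1) ∧
    Filter.Tendsto f Filter.atTop (nhds (1 / 2)) := by
  refine ⟨?_, ?_, ?_⟩
  · intro y hy
    have hy0 : 0 < y := lt_trans one_pos hy
    have hfe : f y = Real.sqrt (y ^ 2 + 1) / (Real.sqrt (y ^ 2 + 1) + y) := by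
      rw [hf, key_form y hy0]
    set s := Real.sqrt (y ^ 2 + 1) with hs
    have hs2 : s ^ 2 = y ^ 2 + 1 := Real.sq_sqrt (by positivity)
    have hspos : 0 < s := Real.sqrt_pos.2 (by positivity)
    have hsy : y < s := by nlinarith
    have hsq2 : Real.sqrt 2 ^ 2 = 2 := Real.sq_sqrt (by norm_num)
    have hsq2pos : (0:ℝ) < Real.sqrt 2 := Real.sqrt_pos.2 (by norm_num)
    have hsq2lt : Real.sqrt 2 < 2 := by nlinarith
    constructor
    · rw [hfe, lt_div_iff₀ (by positivity)]; nlinarith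
    · rw [hfe, div_lt_iff₀ (by positivity)]
      -- s < (2 - √2)(s + y) ⇔ (√2 - 1) s < (2 - √2) y = √2(√2-1) y ⇔ s < √2 y
      have h1 : s < Real.sqrt 2 * y := by
        rw [hs, show Real.sqrt 2 * y = Real.sqrt (2 * y ^ 2) by
          rw [Real.sqrt_mul (by norm_num), Real.sqrt_sq hy0.le]]
        exact Real.sqrt_lt_sqrt (by positivity) (by nlinarith)
      have h2 : (Real.sqrt 2 - 1) * s < (Real.sqrt 2 - 1) * (Real.sqrt 2 * y) :=
        mul_lt_mul_of_pos_left h1 (by nlinarith)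
      nlinarith [h2, hsq2]
  · intro a ha b hb hab
    simp only [Set.mem_Ioi] at ha hb
    have ha0 : 0 < a := lt_trans one_pos ha
    have hb0 : 0 < b := lt_trans one_pos hb
    rw [hf, hf, key_form a ha0, key_form b hb0]
    set sa := Real.sqrt (a ^ 2 + 1) with hsa
    set sb := Real.sqrt (b ^ 2 + 1) with hsb
    have hsa2 : sa ^ 2 = a ^ 2 + 1 := Real.sq_sqrt (by positivity)
    have hsb2 : sb ^ 2 = b ^ 2 + 1 := Real.sq_sqrt (by positivity)
    have hsap : 0 < sa := Real.sqrt_pos.2 (by positivity)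
    have hsbp : 0 < sb := Real.sqrt_pos.2 (by positivity)
    rw [div_lt_div_iff₀ (by positivity) (by positivity)]
    -- sb(sa+a) < sa(sb+b) ⇔ sb a < sa b
    have e1 : sb * a = Real.sqrt ((b ^ 2 + 1) * a ^ 2) := by
      rw [hsb, ← Real.sqrt_sq ha0.le, ← Real.sqrt_mul (by positivity), Real.sqrt_sq ha0.le]
    have e2 : sa * b = Real.sqrt ((a ^ 2 + 1) * b ^ 2) := by
      rw [hsa, ← Real.sqrt_sq hb0.le, ← Real.sqrt_mul (by positivity), Real.sqrt_sq hb0.le]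
    have hkey : sb * a < sa * b := by
      rw [e1, e2]
      exact Real.sqrt_lt_sqrt (by positivity) (by nlinarith)
    calc sb * (sa + a) = sa * sb + sb * a := by ring
      _ < sa * sb + sa * b := by linarith
      _ = sa * (sb + b) := by ring
  · have h0 : Tendsto (fun y : ℝ => (y ^ 2)⁻¹) atTop (nhds 0) :=
      tendsto_inv_atTop_zero.comp (tendsto_pow_atTop (two_ne_zero))
    have h1 : Tendsto (fun y : ℝ => Real.sqrt (1 + (y ^ 2)⁻¹)) atTop (nhds 1) := by
      have : Tendsto (fun y : ℝ => 1 + (y ^ 2)⁻¹) atTop (nhds 1) := by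
        simpa using tendsto_const_nhds.add h0
      have := (Real.continuous_sqrt.tendsto 1).comp this
      simpa [Function.comp_def] using this
    have h2 : Tendsto (fun y : ℝ => Real.sqrt (1 + (y ^ 2)⁻¹) / (Real.sqrt (1 + (y ^ 2)⁻¹) + 1))
        atTop (nhds (1 / 2)) := by
      have hd : Tendsto (fun y : ℝ => Real.sqrt (1 + (y ^ 2)⁻¹) + 1) atTop (nhds (1 + 1)) :=
        h1.add tendsto_const_nhds
      have h3 := h1.div hd (by norm_num)
      have : (1:ℝ) / 2 = 1 / (1 + 1) := by norm_num
      rw [this]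
      exact h3
    refine h2.congr' ?_
    filter_upwards [eventually_gt_atTop (0 : ℝ)] with y hy
    have hy2 : (0:ℝ) < y ^ 2 := by positivity
    have hroot : Real.sqrt (1 + (y ^ 2)⁻¹) = Real.sqrt (y ^ 2 + 1) / y := by
      rw [eq_div_iff (ne_of_gt hy), ← Real.sqrt_sq hy.le, ← Real.sqrt_mul (by positivity)]
      congr 1
      field_simp
      rw [Real.sq_sqrt hy2.le]
    rw [hf, key_form y hy, hroot]
    set s := Real.sqrt (y ^ 2 + 1) with hs
    have hspos : 0 < s := Real.sqrt_pos.2 (by positivity)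
    rw [div_add_one (ne_of_gt hy)]
    field_simp
end

section
/- In the four-landmark rhombus configuration, the linear system for the y-component coefficients has the explicit solution c_{2,1} = Δ(β² + β - 2α²)/((1-β)((1+β)² - 4α²)), c_{2,2} = c_{2,4} = Δ α/((1+β)² - 4α²), c_{2,3} = -Δ(1 + β - 2α²)/((1-β)((1+β)² - 4α²)), provided (1-β)((1+β)² - 4α²) ≠ 0. -/
/-- Explicit solution of the four-landmark rhombus interpolation system for
the y-component coefficients. -/
theorem fourlandmark_system_solution (α β Δ c1 c2 c3 c4 : ℝ)
    (hne : (1 - β) * ((1 + β) ^ 2 - 4 * α ^ 2) ≠ 0)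
    (e1 : c1 + α * c2 + β * c3 + α * c4 = 0)
    (e2 : α * c1 + c2 + α * c3 + β * c4 = 0)
    (e3 : β * c1 + α * c2 + c3 + α * c4 = -Δ)
    (e4 : α * c1 + β * c2 + α * c3 + c4 = 0) :
    c1 = Δ * (β ^ 2 + β - 2 * α ^ 2) / ((1 - β) * ((1 + β) ^ 2 - 4 * α ^ 2)) ∧
    c2 = Δ * α / ((1 + β) ^ 2 - 4 * α ^ 2) ∧
    c3 = -(Δ * (1 + β - 2 * α ^ 2)) / ((1 - β) * ((1 + β) ^ 2 - 4 * α ^ 2)) ∧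
    c4 = c2 := by
  have h1 : (1 - β) ≠ 0 := fun h => hne (by rw [h, zero_mul])
  have hP : ((1 + β) ^ 2 - 4 * α ^ 2) ≠ 0 := fun h => hne (by rw [h, mul_zero])
  have key1 : c1 * ((1 - β) * ((1 + β) ^ 2 - 4 * α ^ 2)) =
      Δ * (β ^ 2 + β - 2 * α ^ 2) := by
    linear_combination (1 + β - 2 * α ^ 2) * e1 + (-α * (1 - β)) * e2 +
      (2 * α ^ 2 - β - β ^ 2) * e3 + (-α * (1 - β)) * e4
  have key3 : c3 * ((1 - β) * ((1 + β) ^ 2 - 4 * α ^ 2)) =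
      -(Δ * (1 + β - 2 * α ^ 2)) := by
    linear_combination (2 * α ^ 2 - β - β ^ 2) * e1 + (-α * (1 - β)) * e2 +
      (1 + β - 2 * α ^ 2) * e3 + (-α * (1 - β)) * e4
  have key2' : (c2 * ((1 + β) ^ 2 - 4 * α ^ 2)) * (1 - β) ^ 2 =
      (Δ * α) * (1 - β) ^ 2 := by
    linear_combination (-α * (1 - β) ^ 2) * e1 + ((1 - β) * (1 + β - 2 * α ^ 2)) * e2 +
      (-α * (1 - β) ^ 2) * e3 + ((1 - β) * (2 * α ^ 2 - β - β ^ 2)) * e4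
  have key2 : c2 * ((1 + β) ^ 2 - 4 * α ^ 2) = Δ * α :=
    mul_right_cancel₀ (pow_ne_zero 2 h1) key2'
  have h24 : (c2 - c4) * (1 - β) = 0 := by linear_combination e2 - e4
  refine ⟨?_, ?_, ?_, ?_⟩
  · rw [eq_div_iff hne]; exact key1
  · rw [eq_div_iff hP]; exact key2
  · rw [eq_div_iff hne]; exact key3
  · have := (mul_eq_zero.mp h24).resolve_right h1
    linarith [sub_eq_zero.mp this]
end

section
/- The Gneiting function τ_{2,7/2}(r) = (1 - r)^{7/2}(1 + (7/2) r - (135/8) r²), extended by zero for r > 1, is of class C² on [0, ∞). -/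
open Real

noncomputable def qfun : ℝ → ℝ := fun x => x * Real.sqrt x

lemma qfun_hasDeriv (x : ℝ) : HasDerivAt qfun ((3 / 2) * Real.sqrt x) x := by
  rcases lt_trichotomy x 0 with hx | hx | hx
  · have hev : (fun _ : ℝ => (0 : ℝ)) =ᶠ[nhds x] qfun := by
      filter_upwards [Iio_mem_nhds hx] with y hy
      simp only [qfun, Real.sqrt_eq_zero'.2 (le_of_lt hy), mul_zero]
    have h0 : HasDerivAt (fun _ : ℝ => (0 : ℝ)) 0 x := hasDerivAt_const x 0
    have := h0.congr_of_eventuallyEq hev.symm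
    refine this.congr_deriv ?_
    rw [Real.sqrt_eq_zero'.2 hx.le]
    ring
  · subst hx
    rw [hasDerivAt_iff_tendsto_slope]
    have hsl : ∀ y ∈ ({(0:ℝ)}ᶜ : Set ℝ), Real.sqrt y = slope qfun 0 y := by
      intro y hy
      have hy0 : y ≠ 0 := hy
      simp only [slope, qfun, Real.sqrt_zero, mul_zero, vsub_eq_sub, sub_zero, smul_eq_mul]
      field_simp
    have : Filter.Tendsto Real.sqrt (nhdsWithin 0 {(0:ℝ)}ᶜ) (nhds (Real.sqrt 0)) :=
      (Real.continuous_sqrt.continuousAt).tendsto.mono_left nhdsWithin_le_nhds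
    simp only [Real.sqrt_zero] at this
    have h2 := this.congr' (Filter.eventuallyEq_of_mem self_mem_nhdsWithin hsl)
    convert h2 using 2
    simp
  · have hs : Real.sqrt x ≠ 0 := by positivity
    have h1 : HasDerivAt (fun y : ℝ => y * Real.sqrt y)
        (1 * Real.sqrt x + x * (1 / (2 * Real.sqrt x))) x :=
      (hasDerivAt_id x).mul (Real.hasDerivAt_sqrt hx.ne')
    refine h1.congr_deriv ?_
    have hxx : Real.sqrt x * Real.sqrt x = x := Real.mul_self_sqrt hx.le
    field_simp
    nlinarith [hxx]

lemma qfun_cont : Continuous qfun := continuous_id.mul Real.continuous_sqrt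

noncomputable def gfun : ℝ → ℝ := fun x => x ^ 2 * qfun x

lemma gfun_hasDeriv (x : ℝ) : HasDerivAt gfun ((7 / 2) * x * qfun x) x := by
  have h := (hasDerivAt_pow 2 x).mul (qfun_hasDeriv x)
  refine h.congr_deriv ?_
  simp only [qfun]
  norm_num
  ring

lemma gfun_deriv : deriv gfun = fun x => (7 / 2) * x * qfun x :=
  funext fun x => (gfun_hasDeriv x).deriv

lemma gfun_deriv2_hasDeriv (x : ℝ) :
    HasDerivAt (fun x => (7 / 2) * x * qfun x) ((35 / 4) * qfun x) x := by
  have h := ((hasDerivAt_id x).const_mul (7/2 : ℝ)).mul (qfun_hasDeriv x)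
  refine h.congr_deriv ?_
  simp only [qfun, id]
  ring

lemma gfun_contDiff : ContDiff ℝ 2 gfun := by
  rw [show (2 : WithTop ℕ∞) = 1 + 1 from rfl, contDiff_succ_iff_deriv]
  refine ⟨fun x => (gfun_hasDeriv x).differentiableAt, by simp, ?_⟩
  rw [gfun_deriv, contDiff_one_iff_deriv]
  refine ⟨fun x => (gfun_deriv2_hasDeriv x).differentiableAt, ?_⟩
  have : deriv (fun x => (7 / 2) * x * qfun x) = fun x => (35 / 4) * qfun x :=
    funext fun x => (gfun_deriv2_hasDeriv x).deriv
  rw [this]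
  exact continuous_const.mul qfun_cont

lemma rpow_seven_half (x : ℝ) (hx : 0 ≤ x) :
    x ^ ((7 : ℝ) / 2) = x ^ (3 : ℕ) * Real.sqrt x := by
  rw [Real.sqrt_eq_rpow, ← Real.rpow_natCast x 3,
    ← Real.rpow_add' hx (by norm_num : ((3:ℕ):ℝ) + 1/2 ≠ 0)]
  norm_num

/-- The Gneiting function τ_{2,7/2}, extended by zero for r > 1, is of class C²
on [0,∞). -/
theorem gneiting_7half_C2 (τ : ℝ → ℝ)
    (hτ : ∀ r : ℝ, τ r =
      if r ≤ 1 then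
        (1 - r) ^ ((7 : ℝ) / 2) * (1 + (7 / 2) * r - (135 / 8) * r ^ 2)
      else 0) :
    ContDiffOn ℝ 2 τ (Set.Ici (0 : ℝ)) := by
  have hF : ContDiff ℝ 2 (fun r : ℝ => gfun (1 - r) * (1 + (7 / 2) * r - (135 / 8) * r ^ 2)) :=
    (gfun_contDiff.comp (contDiff_const.sub contDiff_id)).mul (by fun_prop)
  have heq : ∀ r : ℝ, τ r = gfun (1 - r) * (1 + (7 / 2) * r - (135 / 8) * r ^ 2) := by
    intro r
    rw [hτ r]
    by_cases h : r ≤ 1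
    · rw [if_pos h]
      congr 1
      rw [rpow_seven_half (1 - r) (by linarith)]
      simp only [gfun, qfun]
      ring
    · rw [if_neg h]
      push_neg at h
      have : Real.sqrt (1 - r) = 0 := Real.sqrt_eq_zero'.2 (by linarith)
      simp [gfun, qfun, this]
  exact hF.contDiffOn.congr (fun r _ => heq r)
end
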